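/- Fix average power constraints P̄1, P̄2 > 0 and let 𝒫 be the set of measurable p = (p1, p2) : Ω → [0,∞)² with E[p_k] ≤ P̄_k for k = 1, 2. Suppose p* ∈ 𝒫 attains the supremum of S1(0,p) over p ∈ 𝒫 (the single-user waterfilling policy for the two interference-free links), and suppose S1(0,p*) < min(S2(0,p*), S3(0,p*)) (the ergodic-very-strong condition). Then the supremum over all p ∈ 𝒫 and all power-split policies (α1, α2) of min over j ∈ {1,...,6} of S_j(α,p) equals S1(0,p*) = E[C(g11 p1*)] + E[C(g22 p2*)], and it is attained at α ≡ 0 and p = p*. -/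
import Mathlib


open MeasureTheory

/-- `C(x) = log₂(1+x)`. -/
noncomputable def C (x : ℝ) : ℝ := Real.logb 2 (1 + x)

variable {Ω : Type*} [MeasurableSpace Ω]

/-- Han–Kobayashi sum-rate bound `S1(α,p)` (sum of the two individual-rate bounds). -/
noncomputable def S1 (μ : Measure Ω) (g11 g12 g21 g22 p1 p2 a1 a2 : Ω → ℝ) : ℝ :=
  (∫ ω, C (g11 ω * p1 ω / (1 + a2 ω * g12 ω * p2 ω)) ∂μ)
    + ∫ ω, C (g22 ω * p2 ω / (1 + a1 ω * g21 ω * p1 ω)) ∂μ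

/-- Han–Kobayashi sum-rate bound `S2(α,p)`. -/
noncomputable def S2 (μ : Measure Ω) (g11 g12 g21 g22 p1 p2 a1 a2 : Ω → ℝ) : ℝ :=
  (∫ ω, C ((g11 ω * p1 ω + (1 - a2 ω) * g12 ω * p2 ω) / (1 + a2 ω * g12 ω * p2 ω)) ∂μ)
    + ∫ ω, C (a2 ω * g22 ω * p2 ω / (1 + a1 ω * g21 ω * p1 ω)) ∂μ

/-- Han–Kobayashi sum-rate bound `S3(α,p)`: `S2` with the roles of the two users swapped. -/
noncomputable def S3 (μ : Measure Ω) (g11 g12 g21 g22 p1 p2 a1 a2 : Ω → ℝ) : ℝ :=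
  S2 μ g22 g21 g12 g11 p2 p1 a2 a1

/-- Han–Kobayashi sum-rate bound `S4(α,p)`. -/
noncomputable def S4 (μ : Measure Ω) (g11 g12 g21 g22 p1 p2 a1 a2 : Ω → ℝ) : ℝ :=
  (∫ ω, C ((a1 ω * g11 ω * p1 ω + (1 - a2 ω) * g12 ω * p2 ω) / (1 + a2 ω * g12 ω * p2 ω)) ∂μ)
    + ∫ ω, C ((a2 ω * g22 ω * p2 ω + (1 - a1 ω) * g21 ω * p1 ω) / (1 + a1 ω * g21 ω * p1 ω)) ∂μ

/-- Han–Kobayashi sum-rate bound `S5(α,p)` (the `2R1 + R2` bound combined with `R2`). -/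
noncomputable def S5 (μ : Measure Ω) (g11 g12 g21 g22 p1 p2 a1 a2 : Ω → ℝ) : ℝ :=
  ((∫ ω, C ((g11 ω * p1 ω + (1 - a2 ω) * g12 ω * p2 ω) / (1 + a2 ω * g12 ω * p2 ω)) ∂μ)
    + (∫ ω, C (a1 ω * g11 ω * p1 ω / (1 + a2 ω * g12 ω * p2 ω)) ∂μ)
    + (∫ ω, C ((a2 ω * g22 ω * p2 ω + (1 - a1 ω) * g21 ω * p1 ω) / (1 + a1 ω * g21 ω * p1 ω)) ∂μ)
    + ∫ ω, C (g22 ω * p2 ω / (1 + a1 ω * g21 ω * p1 ω)) ∂μ) / 2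

/-- Han–Kobayashi sum-rate bound `S6(α,p)`: `S5` with the roles of the two users swapped. -/
noncomputable def S6 (μ : Measure Ω) (g11 g12 g21 g22 p1 p2 a1 a2 : Ω → ℝ) : ℝ :=
  S5 μ g22 g21 g12 g11 p2 p1 a2 a1

/-- The Han–Kobayashi sum-rate bound: `min` over `j ∈ {1,…,6}` of `S_j(α,p)`. -/
noncomputable def minS (μ : Measure Ω) (g11 g12 g21 g22 p1 p2 a1 a2 : Ω → ℝ) : ℝ :=
  min (S1 μ g11 g12 g21 g22 p1 p2 a1 a2)
    (min (S2 μ g11 g12 g21 g22 p1 p2 a1 a2)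
      (min (S3 μ g11 g12 g21 g22 p1 p2 a1 a2)
        (min (S4 μ g11 g12 g21 g22 p1 p2 a1 a2)
          (min (S5 μ g11 g12 g21 g22 p1 p2 a1 a2) (S6 μ g11 g12 g21 g22 p1 p2 a1 a2)))))

/-- A feasible power policy: measurable, nonnegative, integrable, with fading-averaged powers
at most `P̄1`, `P̄2`. -/
def Feasible (μ : Measure Ω) (P1bar P2bar : ℝ) (q1 q2 : Ω → ℝ) : Prop :=
  Measurable q1 ∧ Measurable q2 ∧ (∀ ω, 0 ≤ q1 ω) ∧ (∀ ω, 0 ≤ q2 ω) ∧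
    Integrable q1 μ ∧ Integrable q2 μ ∧
    (∫ ω, q1 ω ∂μ) ≤ P1bar ∧ (∫ ω, q2 ω ∂μ) ≤ P2bar


section Helpers

lemma C_zero : C 0 = 0 := by simp [C]

lemma C_nonneg {x : ℝ} (hx : 0 ≤ x) : 0 ≤ C x :=
  Real.logb_nonneg one_lt_two (by linarith)

lemma C_mono {x y : ℝ} (hx : 0 ≤ x) (h : x ≤ y) : C x ≤ C y :=
  Real.logb_le_logb_of_le (by norm_num : (1:ℝ) < 2) (by linarith) (by linarith)

lemma C_subadd {a b : ℝ} (ha : 0 ≤ a) (hb : 0 ≤ b) : C (a + b) ≤ C a + C b := by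
  unfold C
  rw [← Real.logb_mul (by positivity) (by positivity)]
  exact Real.logb_le_logb_of_le (by norm_num : (1:ℝ) < 2) (by linarith) (by nlinarith)

lemma measurable_C : Measurable C :=
  Real.measurable_log.comp (measurable_const.add measurable_id) |>.div_const _

variable {Ω : Type*} [MeasurableSpace Ω]

/-- Domination lemma: if `0 ≤ f ≤ g` pointwise, `f` measurable and `C ∘ g` integrable,
then `C ∘ f` is integrable. -/
lemma intC {μ : Measure Ω} {f g : Ω → ℝ} (hf : Measurable f) (hfn : ∀ ω, 0 ≤ f ω)
    (hle : ∀ ω, f ω ≤ g ω) (hg : Integrable (fun ω => C (g ω)) μ) :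
    Integrable (fun ω => C (f ω)) μ :=
  hg.mono' (measurable_C.comp hf).aestronglyMeasurable (Filter.Eventually.of_forall fun ω => by
    rw [Real.norm_eq_abs, abs_of_nonneg (C_nonneg (hfn ω))]
    exact C_mono (hfn ω) (hle ω))

end Helpers

/-- If `p*` maximizes `S1(0,p)` over the feasible set `𝒫` (single-user
waterfilling for the two interference-free links) and the ergodic-very-strong condition
`S1(0,p*) < min(S2(0,p*), S3(0,p*))` holds, then the supremum over all `p ∈ 𝒫` and all
power-split policies of `min_{j∈{1,…,6}} S_j(α,p)` equals
`S1(0,p*) = E[C(g11 p1*)] + E[C(g22 p2*)]`, attained at `α ≡ 0` and `p = p*`. -/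
theorem stmt7 (μ : Measure Ω) [IsProbabilityMeasure μ]
    (g11 g12 g21 g22 : Ω → ℝ)
    (hg11 : Measurable g11) (hg12 : Measurable g12)
    (hg21 : Measurable g21) (hg22 : Measurable g22)
    (hg11n : ∀ ω, 0 ≤ g11 ω) (hg12n : ∀ ω, 0 ≤ g12 ω)
    (hg21n : ∀ ω, 0 ≤ g21 ω) (hg22n : ∀ ω, 0 ≤ g22 ω)
    (P1bar P2bar : ℝ) (hP1 : 0 < P1bar) (hP2 : 0 < P2bar)
    (hInt : ∀ q1 q2 : Ω → ℝ, Feasible μ P1bar P2bar q1 q2 →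
      Integrable (fun ω => C (g11 ω * q1 ω + g12 ω * q2 ω)) μ ∧
      Integrable (fun ω => C (g21 ω * q1 ω + g22 ω * q2 ω)) μ)
    (p1s p2s : Ω → ℝ) (hps : Feasible μ P1bar P2bar p1s p2s)
    (hopt : ∀ q1 q2 : Ω → ℝ, Feasible μ P1bar P2bar q1 q2 →
      S1 μ g11 g12 g21 g22 q1 q2 0 0 ≤ S1 μ g11 g12 g21 g22 p1s p2s 0 0)
    (hEVS : S1 μ g11 g12 g21 g22 p1s p2s 0 0
      < min (S2 μ g11 g12 g21 g22 p1s p2s 0 0) (S3 μ g11 g12 g21 g22 p1s p2s 0 0)) :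
    IsGreatest
      {s : ℝ | ∃ q1 q2 a1 a2 : Ω → ℝ, Feasible μ P1bar P2bar q1 q2 ∧
        Measurable a1 ∧ Measurable a2 ∧
        (∀ ω, a1 ω ∈ Set.Icc (0 : ℝ) 1) ∧ (∀ ω, a2 ω ∈ Set.Icc (0 : ℝ) 1) ∧
        s = minS μ g11 g12 g21 g22 q1 q2 a1 a2}
      (S1 μ g11 g12 g21 g22 p1s p2s 0 0)
    ∧ S1 μ g11 g12 g21 g22 p1s p2s 0 0
        = (∫ ω, C (g11 ω * p1s ω) ∂μ) + ∫ ω, C (g22 ω * p2s ω) ∂μ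
    ∧ minS μ g11 g12 g21 g22 p1s p2s 0 0 = S1 μ g11 g12 g21 g22 p1s p2s 0 0 := by
  obtain ⟨hm1, hm2, hn1, hn2, hi1, hi2, he1, he2⟩ := hps
  -- value computations at α = 0
  have hS1z : ∀ q1 q2 : Ω → ℝ, S1 μ g11 g12 g21 g22 q1 q2 0 0
      = (∫ ω, C (g11 ω * q1 ω) ∂μ) + ∫ ω, C (g22 ω * q2 ω) ∂μ := by
    intro q1 q2; simp [S1]
  have hS2z : S2 μ g11 g12 g21 g22 p1s p2s 0 0
      = ∫ ω, C (g11 ω * p1s ω + g12 ω * p2s ω) ∂μ := by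
    simp [S2, C_zero]
  have hS3z : S3 μ g11 g12 g21 g22 p1s p2s 0 0
      = ∫ ω, C (g22 ω * p2s ω + g21 ω * p1s ω) ∂μ := by
    simp [S3, S2, C_zero]
  have hS4z : S4 μ g11 g12 g21 g22 p1s p2s 0 0
      = (∫ ω, C (g12 ω * p2s ω) ∂μ) + ∫ ω, C (g21 ω * p1s ω) ∂μ := by
    simp [S4]
  have hS5z : S5 μ g11 g12 g21 g22 p1s p2s 0 0
      = ((∫ ω, C (g11 ω * p1s ω + g12 ω * p2s ω) ∂μ) + (∫ ω, C (g21 ω * p1s ω) ∂μ)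
          + ∫ ω, C (g22 ω * p2s ω) ∂μ) / 2 := by
    simp [S5, C_zero]
  have hS6z : S6 μ g11 g12 g21 g22 p1s p2s 0 0
      = ((∫ ω, C (g22 ω * p2s ω + g21 ω * p1s ω) ∂μ) + (∫ ω, C (g12 ω * p2s ω) ∂μ)
          + ∫ ω, C (g11 ω * p1s ω) ∂μ) / 2 := by
    simp [S6, S5, C_zero]
  set A := ∫ ω, C (g11 ω * p1s ω) ∂μ with hA
  set B := ∫ ω, C (g22 ω * p2s ω) ∂μ with hB
  set A' := ∫ ω, C (g21 ω * p1s ω) ∂μ with hA'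
  set B' := ∫ ω, C (g12 ω * p2s ω) ∂μ with hB'
  have hfeas : Feasible μ P1bar P2bar p1s p2s := ⟨hm1, hm2, hn1, hn2, hi1, hi2, he1, he2⟩
  obtain ⟨iSum1, iSum2⟩ := hInt p1s p2s hfeas
  have n11 : ∀ ω, 0 ≤ g11 ω * p1s ω := fun ω => mul_nonneg (hg11n ω) (hn1 ω)
  have n12 : ∀ ω, 0 ≤ g12 ω * p2s ω := fun ω => mul_nonneg (hg12n ω) (hn2 ω)
  have n21 : ∀ ω, 0 ≤ g21 ω * p1s ω := fun ω => mul_nonneg (hg21n ω) (hn1 ω)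
  have n22 : ∀ ω, 0 ≤ g22 ω * p2s ω := fun ω => mul_nonneg (hg22n ω) (hn2 ω)
  have iA : Integrable (fun ω => C (g11 ω * p1s ω)) μ :=
    intC (hg11.mul hm1) n11 (fun ω => le_add_of_nonneg_right (n12 ω)) iSum1
  have iB' : Integrable (fun ω => C (g12 ω * p2s ω)) μ :=
    intC (hg12.mul hm2) n12 (fun ω => le_add_of_nonneg_left (n11 ω)) iSum1
  have iA' : Integrable (fun ω => C (g21 ω * p1s ω)) μ :=
    intC (hg21.mul hm1) n21 (fun ω => le_add_of_nonneg_right (n22 ω)) iSum2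
  have iB : Integrable (fun ω => C (g22 ω * p2s ω)) μ :=
    intC (hg22.mul hm2) n22 (fun ω => le_add_of_nonneg_left (n21 ω)) iSum2
  -- subadditivity of integrated sum rates
  have hsub1 : (∫ ω, C (g11 ω * p1s ω + g12 ω * p2s ω) ∂μ) ≤ A + B' := by
    calc (∫ ω, C (g11 ω * p1s ω + g12 ω * p2s ω) ∂μ)
        ≤ ∫ ω, (C (g11 ω * p1s ω) + C (g12 ω * p2s ω)) ∂μ :=
          integral_mono iSum1 (iA.add iB') (fun ω => C_subadd (n11 ω) (n12 ω))
      _ = A + B' := integral_add iA iB'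
  have hsub2 : (∫ ω, C (g22 ω * p2s ω + g21 ω * p1s ω) ∂μ) ≤ B + A' := by
    have hrw : (fun ω => C (g22 ω * p2s ω + g21 ω * p1s ω))
        = fun ω => C (g21 ω * p1s ω + g22 ω * p2s ω) := by
      funext ω; ring_nf
    calc (∫ ω, C (g22 ω * p2s ω + g21 ω * p1s ω) ∂μ)
        ≤ ∫ ω, (C (g22 ω * p2s ω) + C (g21 ω * p1s ω)) ∂μ := by
          refine integral_mono ?_ (iB.add iA') (fun ω => C_subadd (n22 ω) (n21 ω))
          rw [hrw]; exact iSum2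
      _ = B + A' := integral_add iB iA'
  have hS1v : S1 μ g11 g12 g21 g22 p1s p2s 0 0 = A + B := hS1z p1s p2s
  have hEVS2 : A + B < ∫ ω, C (g11 ω * p1s ω + g12 ω * p2s ω) ∂μ := by
    have := lt_of_lt_of_le hEVS (min_le_left _ _)
    rwa [hS1v, hS2z] at this
  have hEVS3 : A + B < ∫ ω, C (g22 ω * p2s ω + g21 ω * p1s ω) ∂μ := by
    have := lt_of_lt_of_le hEVS (min_le_right _ _)
    rwa [hS1v, hS3z] at this
  have hBB' : B < B' := by linarith
  have hAA' : A < A' := by linarith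
  -- minS at (p*, 0, 0) equals S1
  have hminS : minS μ g11 g12 g21 g22 p1s p2s 0 0 = S1 μ g11 g12 g21 g22 p1s p2s 0 0 := by
    rw [minS]
    refine min_eq_left (le_min ?_ (le_min ?_ (le_min ?_ (le_min ?_ ?_))))
    · rw [hS1v, hS2z]; linarith
    · rw [hS1v, hS3z]; linarith
    · rw [hS1v, hS4z]; linarith
    · rw [hS1v, hS5z]; linarith
    · rw [hS1v, hS6z]; linarith
  -- upper bound for arbitrary feasible (q, α)
  have hub : ∀ q1 q2 a1 a2 : Ω → ℝ, Feasible μ P1bar P2bar q1 q2 →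
      Measurable a1 → Measurable a2 →
      (∀ ω, a1 ω ∈ Set.Icc (0 : ℝ) 1) → (∀ ω, a2 ω ∈ Set.Icc (0 : ℝ) 1) →
      minS μ g11 g12 g21 g22 q1 q2 a1 a2 ≤ S1 μ g11 g12 g21 g22 p1s p2s 0 0 := by
    intro q1 q2 a1 a2 hq ha1 ha2 ha1i ha2i
    obtain ⟨jSum1, jSum2⟩ := hInt q1 q2 hq
    obtain ⟨hqm1, hqm2, hqn1, hqn2, hqi1, hqi2, hqe1, hqe2⟩ := hq
    have m11 : ∀ ω, 0 ≤ g11 ω * q1 ω := fun ω => mul_nonneg (hg11n ω) (hqn1 ω)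
    have m12 : ∀ ω, 0 ≤ g12 ω * q2 ω := fun ω => mul_nonneg (hg12n ω) (hqn2 ω)
    have m21 : ∀ ω, 0 ≤ g21 ω * q1 ω := fun ω => mul_nonneg (hg21n ω) (hqn1 ω)
    have m22 : ∀ ω, 0 ≤ g22 ω * q2 ω := fun ω => mul_nonneg (hg22n ω) (hqn2 ω)
    have d2 : ∀ ω, (1:ℝ) ≤ 1 + a2 ω * g12 ω * q2 ω := fun ω =>
      le_add_of_nonneg_right (by
        have := (ha2i ω).1; have := m12 ω; nlinarith [m12 ω])
    have d1 : ∀ ω, (1:ℝ) ≤ 1 + a1 ω * g21 ω * q1 ω := fun ω =>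
      le_add_of_nonneg_right (by
        have := (ha1i ω).1; nlinarith [m21 ω])
    have f1le : ∀ ω, g11 ω * q1 ω / (1 + a2 ω * g12 ω * q2 ω) ≤ g11 ω * q1 ω := fun ω =>
      div_le_self (m11 ω) (d2 ω)
    have f2le : ∀ ω, g22 ω * q2 ω / (1 + a1 ω * g21 ω * q1 ω) ≤ g22 ω * q2 ω := fun ω =>
      div_le_self (m22 ω) (d1 ω)
    have f1n : ∀ ω, 0 ≤ g11 ω * q1 ω / (1 + a2 ω * g12 ω * q2 ω) := fun ω =>
      div_nonneg (m11 ω) (by linarith [d2 ω])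
    have f2n : ∀ ω, 0 ≤ g22 ω * q2 ω / (1 + a1 ω * g21 ω * q1 ω) := fun ω =>
      div_nonneg (m22 ω) (by linarith [d1 ω])
    have jA : Integrable (fun ω => C (g11 ω * q1 ω)) μ :=
      intC (hg11.mul hqm1) m11 (fun ω => le_add_of_nonneg_right (m12 ω)) jSum1
    have jB : Integrable (fun ω => C (g22 ω * q2 ω)) μ :=
      intC (hg22.mul hqm2) m22 (fun ω => le_add_of_nonneg_left (m21 ω)) jSum2
    have jf1 : Integrable (fun ω => C (g11 ω * q1 ω / (1 + a2 ω * g12 ω * q2 ω))) μ :=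
      intC ((hg11.mul hqm1).div (measurable_const.add ((ha2.mul hg12).mul hqm2))) f1n
        (fun ω => le_trans (f1le ω) (le_add_of_nonneg_right (m12 ω))) jSum1
    have jf2 : Integrable (fun ω => C (g22 ω * q2 ω / (1 + a1 ω * g21 ω * q1 ω))) μ :=
      intC ((hg22.mul hqm2).div (measurable_const.add ((ha1.mul hg21).mul hqm1))) f2n
        (fun ω => le_trans (f2le ω) (le_add_of_nonneg_left (m21 ω))) jSum2
    calc minS μ g11 g12 g21 g22 q1 q2 a1 a2
        ≤ S1 μ g11 g12 g21 g22 q1 q2 a1 a2 := min_le_left _ _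
      _ ≤ (∫ ω, C (g11 ω * q1 ω) ∂μ) + ∫ ω, C (g22 ω * q2 ω) ∂μ := by
          refine add_le_add ?_ ?_
          · exact integral_mono jf1 jA (fun ω => C_mono (f1n ω) (f1le ω))
          · exact integral_mono jf2 jB (fun ω => C_mono (f2n ω) (f2le ω))
      _ = S1 μ g11 g12 g21 g22 q1 q2 0 0 := (hS1z q1 q2).symm
      _ ≤ S1 μ g11 g12 g21 g22 p1s p2s 0 0 := hopt q1 q2 ⟨hqm1, hqm2, hqn1, hqn2, hqi1, hqi2, hqe1, hqe2⟩
  refine ⟨⟨⟨p1s, p2s, 0, 0, hfeas, measurable_const, measurable_const,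
      (fun ω => ⟨le_refl 0, zero_le_one⟩), (fun ω => ⟨le_refl 0, zero_le_one⟩), hminS.symm⟩, ?_⟩,
    hS1v, hminS⟩
  rintro s ⟨q1, q2, a1, a2, hq, ha1, ha2, ha1i, ha2i, rfl⟩
  exact hub q1 q2 a1 a2 hq ha1 ha2 ha1i ha2i
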